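/- Completeness of the work-set iteration: let (G, H, (∅, ∅, ∅)) = lfp(F'(M)) for a rooted pushdown system M. For every trace π : (s₀, ⟨⟩) ⟼^{g⃗}* (s, κ) in M, the same labeled path from s₀ to s exists in the graph G, and for every non-empty balanced subtrace (s_b, κ') ⟼^{g⃗'}* (s_a, κ') of π (one whose action string g⃗' is non-empty and has net ε), the ε-edge (s_b, s_a) belongs to H. -/
import Mathlib


/-! ### Pushdown systems: stack actions, configurations, transitions -/

/-- Stack actions `Γ±`: push a character, pop a character, or leave the stack unchanged. -/
inductive StackAct (Γ : Type*) where
  | push : Γ → StackAct Γ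
  | pop  : Γ → StackAct Γ
  | eps  : StackAct Γ

/-- A rooted pushdown system `(Q, Γ, δ, q₀)`; `Q` and `Γ` are the (type-level) state
and stack spaces, `δ` the transition relation and `q₀` the initial control state. -/
structure RPDS (Q Γ : Type*) where
  δ : Q → StackAct Γ → Q → Prop
  q₀ : Q

/-- Configurations `Q × Γ*` of a pushdown system (head of the list = top of the stack). -/
abbrev Cfg (Q Γ : Type*) := Q × List Γ

variable {Q Γ : Type*}

/-- The labeled transition relation between configurations. -/
inductive LStep (M : RPDS Q Γ) : Cfg Q Γ → StackAct Γ → Cfg Q Γ → Prop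
  | eps {q q' : Q} {κ : List Γ} :
      M.δ q .eps q' → LStep M (q, κ) .eps (q', κ)
  | pop {q q' : Q} {γ : Γ} {κ : List Γ} :
      M.δ q (.pop γ) q' → LStep M (q, γ :: κ) (.pop γ) (q', κ)
  | push {q q' : Q} {γ : Γ} {κ : List Γ} :
      M.δ q (.push γ) q' → LStep M (q, κ) (.push γ) (q', γ :: κ)

/-- The unlabeled transition relation: some stack action enables the transition. -/
def PStep (M : RPDS Q Γ) (c c' : Cfg Q Γ) : Prop := ∃ g, LStep M c g c'

/-- Multi-step transition `⟼*`. -/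
def Reaches (M : RPDS Q Γ) : Cfg Q Γ → Cfg Q Γ → Prop :=
  Relation.ReflTransGen (PStep M)

/-- Root-reachable labeled transition between configurations:
`c ⟾^g c'` iff `(q₀, ⟨⟩) ⟼* c` and `c ⟼^g c'`. -/
def RootStep (M : RPDS Q Γ) (c : Cfg Q Γ) (g : StackAct Γ) (c' : Cfg Q Γ) : Prop :=
  Reaches M (M.q₀, []) c ∧ LStep M c g c'

/-- Root-reachable labeled transition on control states. -/
def RootTransL (M : RPDS Q Γ) (q : Q) (g : StackAct Γ) (q' : Q) : Prop :=
  ∃ κ κ', RootStep M (q, κ) g (q', κ')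

/-- Root-reachable transition on control states (some action). -/
def RootTrans (M : RPDS Q Γ) (q q' : Q) : Prop := ∃ g, RootTransL M q g q'

/-! ### Action strings, net stack change, traces and the ε-closure graph -/

/-- One cancellation step of the net operator `⌊·⌋` on action strings:
delete an adjacent push-pop pair of the same character, or delete an `ε`. -/
inductive NetStep {Γ : Type*} : List (StackAct Γ) → List (StackAct Γ) → Prop
  | cancel (l r : List (StackAct Γ)) (γ : Γ) :
      NetStep (l ++ StackAct.push γ :: StackAct.pop γ :: r) (l ++ r)
  | eps (l r : List (StackAct Γ)) :
      NetStep (l ++ StackAct.eps :: r) (l ++ r)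

/-- An action string is balanced iff its net `⌊·⌋` is the empty string. -/
def BalancedActs {Γ : Type*} (gs : List (StackAct Γ)) : Prop :=
  Relation.ReflTransGen NetStep gs []

variable {Q Γ : Type*}

/-- Multi-step transition labeled with its string of stack actions:
`c ⟼^{g⃗}* c'`. -/
inductive TraceN (M : RPDS Q Γ) : Cfg Q Γ → List (StackAct Γ) → Cfg Q Γ → Prop
  | refl (c : Cfg Q Γ) : TraceN M c [] c
  | tail {c : Cfg Q Γ} {gs : List (StackAct Γ)} {c' : Cfg Q Γ} {g : StackAct Γ} {c'' : Cfg Q Γ} :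
      TraceN M c gs c' → LStep M c' g c'' → TraceN M c (gs ++ [g]) c''

/-- The ε-closure graph of `M`: pairs of control states connected, from a
root-reachable configuration, by a balanced string of stack actions. -/
def ECG (M : RPDS Q Γ) : Set (Q × Q) :=
  {p | ∃ gs κ κ', Reaches M (M.q₀, []) (p.1, κ) ∧
      TraceN M (p.1, κ) gs (p.2, κ') ∧ BalancedActs gs}

/-! ### The ε-closure-graph work-set algorithm -/

/-- Labeled edges of the explicit transition graph. -/
abbrev PEdge (Q Γ : Type*) := Q × StackAct Γ × Q

/-- The iteration space of the work-set algorithm: a graph `(S, E)`,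
an ε-closure graph `H`, and work-sets `ΔS`, `ΔE`, `ΔH`. -/
structure WState (Q Γ : Type*) where
  S : Set Q
  E : Set (PEdge Q Γ)
  H : Set (Q × Q)
  dS : Set Q
  dE : Set (PEdge Q Γ)
  dH : Set (Q × Q)

/-- Ancestors of a state in an ε-closure graph (ε-closure graphs are reflexive). -/
def eAnc (H : Set (Q × Q)) (s : Q) : Set Q := {s' | (s', s) ∈ H} ∪ {s}

/-- Descendants of a state in an ε-closure graph. -/
def eDesc (H : Set (Q × Q)) (s : Q) : Set Q := {s' | (s, s') ∈ H} ∪ {s}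

/-- `sprout`: push edges and ε-edges of `δ` out of a new state `s`
(ε-edges are also recorded in the ε-closure work-set). -/
def sprout (M : RPDS Q Γ) (s : Q) : Set (PEdge Q Γ) × Set (Q × Q) :=
  ({e | (∃ q, e = (s, StackAct.eps, q) ∧ M.δ s .eps q) ∨
        (∃ γ q, e = (s, StackAct.push γ, q) ∧ M.δ s (.push γ) q)},
   {p | ∃ q, p = (s, q) ∧ M.δ s .eps q})

/-- `addPush`: consequences of a new push edge `(s, γ₊, q)`. -/
def addPush (M : RPDS Q Γ) (_E : Set (PEdge Q Γ)) (H : Set (Q × Q))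
    (s : Q) (γ : Γ) (q : Q) : Set (PEdge Q Γ) × Set (Q × Q) :=
  ({e | ∃ q' q'', e = (q', StackAct.pop γ, q'') ∧ q' ∈ eDesc H q ∧ M.δ q' (.pop γ) q''},
   {p | ∃ q' q'', p = (s, q'') ∧ q' ∈ eDesc H q ∧ M.δ q' (.pop γ) q''})

/-- `addPop`: consequences of a new pop edge `(s'', γ₋, q)`. -/
def addPop (_M : RPDS Q Γ) (E : Set (PEdge Q Γ)) (H : Set (Q × Q))
    (s'' : Q) (γ : Γ) (q : Q) : Set (PEdge Q Γ) × Set (Q × Q) :=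
  (∅,
   {p | ∃ s s', p = (s, q) ∧ s' ∈ eAnc H s'' ∧ (s, StackAct.push γ, s') ∈ E})

/-- `addEmpty`: consequences of a new ε-edge `(s'', s''')`. -/
def addEmpty (M : RPDS Q Γ) (E : Set (PEdge Q Γ)) (H : Set (Q × Q))
    (s'' s''' : Q) : Set (PEdge Q Γ) × Set (Q × Q) :=
  ({e | ∃ s s' s'''' γ q, e = (s'''', StackAct.pop γ, q) ∧
        s' ∈ eAnc H s'' ∧ s'''' ∈ eDesc H s''' ∧
        (s, StackAct.push γ, s') ∈ E ∧ M.δ s'''' (.pop γ) q},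
   {p | ∃ s s' s'''' γ q, p = (s, q) ∧
        s' ∈ eAnc H s'' ∧ s'''' ∈ eDesc H s''' ∧
        (s, StackAct.push γ, s') ∈ E ∧ M.δ s'''' (.pop γ) q} ∪
   {p | ∃ s', p = (s', s''') ∧ s' ∈ eAnc H s''} ∪
   {p | ∃ s'''', p = (s'', s'''') ∧ s'''' ∈ eDesc H s'''} ∪
   {p | ∃ s' s'''', p = (s', s'''') ∧ s' ∈ eAnc H s'' ∧ s'''' ∈ eDesc H s'''})

/-- One step of the ε-closure-graph work-set iteration function `F'(M)`. -/
def Fprime (M : RPDS Q Γ) (W : WState Q Γ) : WState Q Γ :=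
  let dE0 : Set (PEdge Q Γ) := {e | ∃ s ∈ W.dS, e ∈ (sprout M s).1}
  let dH0 : Set (Q × Q)     := {p | ∃ s ∈ W.dS, p ∈ (sprout M s).2}
  let dE1 := {e | ∃ s γ s', (s, StackAct.push γ, s') ∈ W.dE ∧ e ∈ (addPush M W.E W.H s γ s').1}
  let dH1 := {p | ∃ s γ s', (s, StackAct.push γ, s') ∈ W.dE ∧ p ∈ (addPush M W.E W.H s γ s').2}
  let dE2 := {e | ∃ s γ s', (s, StackAct.pop γ, s') ∈ W.dE ∧ e ∈ (addPop M W.E W.H s γ s').1}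
  let dH2 := {p | ∃ s γ s', (s, StackAct.pop γ, s') ∈ W.dE ∧ p ∈ (addPop M W.E W.H s γ s').2}
  let dE3 := {e | ∃ s s', (s, StackAct.eps, s') ∈ W.dE ∧ e ∈ (addEmpty M W.E W.H s s').1}
  let dH3 := {p | ∃ s s', (s, StackAct.eps, s') ∈ W.dE ∧ p ∈ (addEmpty M W.E W.H s s').2}
  let dE4 := {e | ∃ s s', (s, s') ∈ W.dH ∧ e ∈ (addEmpty M W.E W.H s s').1}
  let dH4 := {p | ∃ s s', (s, s') ∈ W.dH ∧ p ∈ (addEmpty M W.E W.H s s').2}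
  let S' := W.S ∪ W.dS
  let E' := W.E ∪ W.dE
  let H' := W.H ∪ W.dH
  let dE' := dE0 ∪ dE1 ∪ dE2 ∪ dE3 ∪ dE4
  let dS' := {s' | ∃ s g, (s, g, s') ∈ dE'} ∪ {M.q₀}
  let dH' := dH0 ∪ dH1 ∪ dH2 ∪ dH3 ∪ dH4
  ⟨S', E', H', dS' \ S', dE' \ E', dH' \ W.H⟩

/-- The initial element of the iteration: empty graphs and work-sets. -/
def initW : WState Q Γ := ⟨∅, ∅, ∅, ∅, ∅, ∅⟩

/-- Labeled paths through a set of graph edges. -/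
inductive GraphPath (E : Set (PEdge Q Γ)) : Q → List (StackAct Γ) → Q → Prop
  | refl (q : Q) : GraphPath E q [] q
  | tail {q : Q} {gs : List (StackAct Γ)} {q' : Q} {g : StackAct Γ} {q'' : Q} :
      GraphPath E q gs q' → (q', g, q'') ∈ E → GraphPath E q (gs ++ [g]) q''

section WCAux

variable {Q Γ : Type*}

/-- Stack-machine evaluation relation for action strings. -/
inductive WCRun : List Γ → List (StackAct Γ) → List Γ → Prop
  | nil (σ : List Γ) : WCRun σ [] σ
  | eps {σ σ' : List Γ} {gs : List (StackAct Γ)} :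
      WCRun σ gs σ' → WCRun σ (.eps :: gs) σ'
  | push {σ σ' : List Γ} {gs : List (StackAct Γ)} (γ : Γ) :
      WCRun (γ :: σ) gs σ' → WCRun σ (.push γ :: gs) σ'
  | pop {σ σ' : List Γ} {gs : List (StackAct Γ)} (γ : Γ) :
      WCRun σ gs σ' → WCRun (γ :: σ) (.pop γ :: gs) σ'

theorem WCRun.append {σ σ' σ'' : List Γ} {l r : List (StackAct Γ)}
    (h : WCRun σ l σ') (h' : WCRun σ' r σ'') : WCRun σ (l ++ r) σ'' := by
  induction h with
  | nil => exact h'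
  | eps _ ih => exact .eps (ih h')
  | push γ _ ih => exact .push γ (ih h')
  | pop γ _ ih => exact .pop γ (ih h')

theorem WCRun.mono {σ σ' : List Γ} {l : List (StackAct Γ)} (τ : List Γ)
    (h : WCRun σ l σ') : WCRun (σ ++ τ) l (σ' ++ τ) := by
  induction h with
  | nil => exact .nil _
  | eps _ ih => exact .eps ih
  | push γ _ ih => exact .push γ ih
  | pop γ _ ih => exact .pop γ ih

theorem WCRun.split_app {σ σ'' : List Γ} (l : List (StackAct Γ)) {r : List (StackAct Γ)}
    (h : WCRun σ (l ++ r) σ'') : ∃ σ', WCRun σ l σ' ∧ WCRun σ' r σ'' := by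
  induction l generalizing σ with
  | nil => exact ⟨σ, .nil σ, h⟩
  | cons g l ih =>
    cases h with
    | eps h' => obtain ⟨σ', h1, h2⟩ := ih h'; exact ⟨σ', .eps h1, h2⟩
    | push γ h' => obtain ⟨σ', h1, h2⟩ := ih h'; exact ⟨σ', .push γ h1, h2⟩
    | pop γ h' => obtain ⟨σ', h1, h2⟩ := ih h'; exact ⟨σ', .pop γ h1, h2⟩

theorem WC_balanced_run {gs : List (StackAct Γ)} (h : BalancedActs gs) :
    WCRun ([] : List Γ) gs [] := by
  unfold BalancedActs at h
  induction h using Relation.ReflTransGen.head_induction_on with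
  | refl => exact .nil []
  | head hstep _ ih =>
    cases hstep with
    | cancel l r γ =>
      obtain ⟨σ', h1, h2⟩ := WCRun.split_app l ih
      exact h1.append (.push γ (.pop γ h2))
    | eps l r =>
      obtain ⟨σ', h1, h2⟩ := WCRun.split_app l ih
      exact h1.append (.eps h2)

theorem WCRun.split_pop :
    ∀ (n : ℕ) (gs : List (StackAct Γ)), gs.length ≤ n → ∀ (γ : Γ) (σ : List Γ),
      WCRun (γ :: σ) gs [] →
      ∃ w v, gs = w ++ .pop γ :: v ∧ WCRun ([] : List Γ) w [] ∧ WCRun σ v [] := by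
  intro n
  induction n with
  | zero =>
    intro gs hlen γ σ hr
    have : gs = [] := by simpa using List.eq_nil_of_length_eq_zero (Nat.le_zero.mp hlen)
    subst this; cases hr
  | succ n ih =>
    intro gs hlen γ σ hr
    cases hr with
    | eps h' =>
      rename_i gs'
      have hlen' : gs'.length ≤ n := by simp at hlen; omega
      obtain ⟨w, v, rfl, hw, hv⟩ := ih gs' hlen' γ σ h'
      exact ⟨.eps :: w, v, rfl, .eps hw, hv⟩
    | push γ' h' =>
      rename_i gs'
      have hlen' : gs'.length ≤ n := by simp at hlen; omega
      obtain ⟨w₁, v₁, rfl, hw₁, hv₁⟩ := ih gs' hlen' γ' (γ :: σ) h'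
      have hlenv : v₁.length ≤ n := by
        simp [List.length_append] at hlen'; omega
      obtain ⟨w₂, v₂, rfl, hw₂, hv₂⟩ := ih v₁ hlenv γ σ hv₁
      refine ⟨.push γ' :: (w₁ ++ .pop γ' :: w₂), v₂, by simp, ?_, hv₂⟩
      have hw₁' : WCRun ([γ'] : List Γ) w₁ [γ'] := by simpa using hw₁.mono [γ']
      exact .push γ' (hw₁'.append (.pop γ' hw₂))
    | pop γ0 h' =>
      rename_i gs'
      exact ⟨[], gs', rfl, .nil [], h'⟩

/-! ### Trace and path utilities -/

theorem WC_traceN_nil' {M : RPDS Q Γ} {c c' : Cfg Q Γ} {gs : List (StackAct Γ)}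
    (h : TraceN M c gs c') : gs = [] → c' = c := by
  induction h with
  | refl => intro; rfl
  | tail _ _ _ => intro h; exact absurd h (by simp)

theorem WC_traceN_nil {M : RPDS Q Γ} {c c' : Cfg Q Γ} (h : TraceN M c [] c') : c' = c :=
  WC_traceN_nil' h rfl

end WCAux
section WCAux2

variable {Q Γ : Type*}

theorem WC_traceN_split' {M : RPDS Q Γ} {c c'' : Cfg Q Γ} {gs : List (StackAct Γ)}
    (h : TraceN M c gs c'') :
    ∀ l r, gs = l ++ r → ∃ c', TraceN M c l c' ∧ TraceN M c' r c'' := by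
  induction h with
  | refl => intro l r hlr
            obtain ⟨rfl, rfl⟩ := List.append_eq_nil_iff.mp hlr.symm
            exact ⟨_, .refl _, .refl _⟩
  | tail t step ih =>
    intro l r hlr
    rcases r.eq_nil_or_concat with rfl | ⟨r', g', rfl⟩
    · simp at hlr
      subst hlr
      exact ⟨_, .tail t step, .refl _⟩
    · rename_i gs₀ _ g _
      have : gs₀ ++ [g] = (l ++ r') ++ [g'] := by simpa [List.append_assoc] using hlr
      obtain ⟨h1, h2⟩ := List.append_inj' this rfl
      obtain rfl : g = g' := by simpa using h2
      obtain ⟨c', t1, t2⟩ := ih l r' h1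
      refine ⟨c', t1, ?_⟩
      have := TraceN.tail t2 step
      simpa using this

theorem WC_traceN_split {M : RPDS Q Γ} {c c'' : Cfg Q Γ} (l r : List (StackAct Γ))
    (h : TraceN M c (l ++ r) c'') : ∃ c', TraceN M c l c' ∧ TraceN M c' r c'' :=
  WC_traceN_split' h l r rfl

theorem WC_traceN_compose {M : RPDS Q Γ} {a b c : Cfg Q Γ} {l r : List (StackAct Γ)}
    (h1 : TraceN M a l b) (h2 : TraceN M b r c) : TraceN M a (l ++ r) c := by
  induction h2 with
  | refl => simpa using h1
  | tail t step ih => rename_i gs _ _ _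
                      have := TraceN.tail ih step
                      simpa [List.append_assoc] using this

theorem WC_traceN_single' {M : RPDS Q Γ} {c c' : Cfg Q Γ} {g : StackAct Γ}
    {gs : List (StackAct Γ)} (h : TraceN M c gs c') : gs = [g] → LStep M c g c' := by
  induction h with
  | refl => intro h; exact absurd h (by simp)
  | @tail gs₀ cm g₀ c₂ t step _ =>
    intro h
    have h' : gs₀ ++ [g₀] = [] ++ [g] := by simpa using h
    obtain ⟨h1, h2⟩ := List.append_inj' h' rfl
    obtain rfl := WC_traceN_nil' t h1
    obtain rfl : g₀ = g := by simpa using h2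
    exact step

theorem WC_traceN_single {M : RPDS Q Γ} {c c' : Cfg Q Γ} {g : StackAct Γ}
    (h : TraceN M c [g] c') : LStep M c g c' := WC_traceN_single' h rfl

theorem WC_traceN_cons {M : RPDS Q Γ} {c c'' : Cfg Q Γ} {g : StackAct Γ}
    {gs : List (StackAct Γ)} (h : TraceN M c (g :: gs) c'') :
    ∃ c', LStep M c g c' ∧ TraceN M c' gs c'' := by
  obtain ⟨c', t1, t2⟩ := WC_traceN_split [g] gs h
  exact ⟨c', WC_traceN_single t1, t2⟩

theorem WC_step_trace {M : RPDS Q Γ} {c c' : Cfg Q Γ} {g : StackAct Γ}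
    (h : LStep M c g c') : TraceN M c [g] c' := by
  have := TraceN.tail (.refl c) h
  simpa using this

theorem WC_path_compose {E : Set (PEdge Q Γ)} {a b c : Q} {l r : List (StackAct Γ)}
    (h1 : GraphPath E a l b) (h2 : GraphPath E b r c) : GraphPath E a (l ++ r) c := by
  induction h2 with
  | refl => simpa using h1
  | tail t e ih => have := GraphPath.tail ih e
                   simpa [List.append_assoc] using this

theorem WC_path_cons {E : Set (PEdge Q Γ)} {a b c : Q} {g : StackAct Γ}
    {gs : List (StackAct Γ)} (he : (a, g, b) ∈ E) (h : GraphPath E b gs c) :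
    GraphPath E a (g :: gs) c := by
  have h1 : GraphPath E a [g] b := by
    have := GraphPath.tail (.refl a) he
    simpa using this
  simpa using WC_path_compose h1 h

end WCAux2
section WCAux3

variable {Q Γ : Type*}

/-- Closure properties of the result of the work-set algorithm at its fixed point. -/
structure WClosure (M : RPDS Q Γ) (S : Set Q) (E : Set (PEdge Q Γ)) (H : Set (Q × Q)) : Prop where
  c0 : M.q₀ ∈ S
  c1 : ∀ s q, s ∈ S → M.δ s .eps q → (s, .eps, q) ∈ E ∧ (s, q) ∈ H
  c2 : ∀ s γ q, s ∈ S → M.δ s (.push γ) q → (s, StackAct.push γ, q) ∈ E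
  c3 : ∀ s g q, (s, g, q) ∈ E → q ∈ S
  c4 : ∀ s γ p m r, (s, StackAct.push γ, p) ∈ E → (p = m ∨ (p, m) ∈ H) →
        M.δ m (.pop γ) r → (m, StackAct.pop γ, r) ∈ E ∧ (s, r) ∈ H
  c5 : ∀ a b c, (a, b) ∈ H → (b, c) ∈ H → (a, c) ∈ H

variable {M : RPDS Q Γ} {S : Set Q} {E : Set (PEdge Q Γ)} {H : Set (Q × Q)}

/-- Core lemma: a balanced trace from a discovered state yields a graph path,
returns to the same stack, and (if non-empty) an ε-closure edge. -/
theorem WC_core (hc : WClosure M S E H) :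
    ∀ (n : ℕ) (gs : List (StackAct Γ)), gs.length ≤ n → WCRun ([] : List Γ) gs [] →
    ∀ q κ q' κ₂, TraceN M (q, κ) gs (q', κ₂) → q ∈ S →
      κ₂ = κ ∧ GraphPath E q gs q' ∧ q' ∈ S ∧ (gs ≠ [] → (q, q') ∈ H) := by
  intro n
  induction n with
  | zero =>
    intro gs hlen _ q κ q' κ₂ ht hq
    obtain rfl : gs = [] := List.eq_nil_of_length_eq_zero (Nat.le_zero.mp hlen)
    obtain ⟨rfl, rfl⟩ : q' = q ∧ κ₂ = κ := by
      have := WC_traceN_nil ht; exact ⟨congrArg Prod.fst this, congrArg Prod.snd this⟩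
    exact ⟨rfl, .refl _, hq, fun h => absurd rfl h⟩
  | succ n ih =>
    intro gs hlen hrun q κ q' κ₂ ht hq
    cases hrun with
    | nil =>
      obtain ⟨rfl, rfl⟩ : q' = q ∧ κ₂ = κ := by
        have := WC_traceN_nil ht; exact ⟨congrArg Prod.fst this, congrArg Prod.snd this⟩
      exact ⟨rfl, .refl _, hq, fun h => absurd rfl h⟩
    | eps h' =>
      rename_i w
      obtain ⟨c₁, step, t⟩ := WC_traceN_cons ht
      cases step with
      | eps hδ =>
        rename_i q₁
        obtain ⟨hedge, hH⟩ := hc.c1 q q₁ hq hδ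
        have hq₁ : q₁ ∈ S := hc.c3 _ _ _ hedge
        have hlen' : w.length ≤ n := by simp at hlen; omega
        obtain ⟨rfl, hpath, hq', hHw⟩ := ih w hlen' h' q₁ κ q' κ₂ t hq₁
        refine ⟨rfl, WC_path_cons hedge hpath, hq', fun _ => ?_⟩
        rcases eq_or_ne w [] with rfl | hne
        · obtain rfl : q' = q₁ := congrArg Prod.fst (WC_traceN_nil t)
          exact hH
        · exact hc.c5 q q₁ q' hH (hHw hne)
    | push γ h' =>
      rename_i rest
      obtain ⟨w, v, rfl, hw, hv⟩ := WCRun.split_pop rest.length rest le_rfl γ [] h'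
      obtain ⟨c₁, step, t⟩ := WC_traceN_cons ht
      cases step with
      | push hδp =>
        rename_i p
        have hedge : (q, StackAct.push γ, p) ∈ E := hc.c2 q γ p hq hδp
        have hp : p ∈ S := hc.c3 _ _ _ hedge
        obtain ⟨⟨m, κm⟩, tw, t2⟩ := WC_traceN_split w (.pop γ :: v) t
        have hlenw : w.length ≤ n := by simp [List.length_append] at hlen; omega
        obtain ⟨rfl, hpathw, hm, hHw⟩ := ih w hlenw hw p (γ :: κ) m κm tw hp
        obtain ⟨c₂, step₂, tv⟩ := WC_traceN_cons t2
        cases step₂ with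
        | pop hδm =>
          rename_i r
          have hrm : p = m ∨ (p, m) ∈ H := by
            rcases eq_or_ne w [] with rfl | hne
            · exact Or.inl (congrArg Prod.fst (WC_traceN_nil tw)).symm
            · exact Or.inr (hHw hne)
          obtain ⟨hpop, hHqr⟩ := hc.c4 q γ p m r hedge hrm hδm
          have hr : r ∈ S := hc.c3 _ _ _ hpop
          have hlenv : v.length ≤ n := by simp [List.length_append] at hlen; omega
          obtain ⟨rfl, hpathv, hq', hHv⟩ := ih v hlenv hv r κ q' κ₂ tv hr
          refine ⟨rfl, WC_path_cons hedge (WC_path_compose hpathw (WC_path_cons hpop hpathv)),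
            hq', fun _ => ?_⟩
          rcases eq_or_ne v [] with rfl | hne
          · obtain rfl : q' = r := congrArg Prod.fst (WC_traceN_nil tv)
            exact hHqr
          · exact hc.c5 q r q' hHqr (hHv hne)

end WCAux3
section WCAux4

variable {Q Γ : Type*} {M : RPDS Q Γ} {S : Set Q} {E : Set (PEdge Q Γ)} {H : Set (Q × Q)}

/-- Every root trace ending with `γ` on top of the stack contains a matching push of `γ`,
followed by a balanced trace. -/
theorem WC_mpush :
    ∀ (n : ℕ) (gs : List (StackAct Γ)), gs.length ≤ n → ∀ (q' : Q) (γ : Γ) (κ : List Γ),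
      TraceN M (M.q₀, []) gs (q', γ :: κ) →
      ∃ gs₁ gs₂ p p', gs = gs₁ ++ StackAct.push γ :: gs₂ ∧
        TraceN M (M.q₀, []) gs₁ (p, κ) ∧ M.δ p (.push γ) p' ∧
        TraceN M (p', γ :: κ) gs₂ (q', γ :: κ) ∧ WCRun ([] : List Γ) gs₂ [] := by
  intro n
  induction n with
  | zero =>
    intro gs hlen q' γ κ ht
    obtain rfl : gs = [] := List.eq_nil_of_length_eq_zero (Nat.le_zero.mp hlen)
    have := WC_traceN_nil ht
    exact absurd (congrArg Prod.snd this) (by simp)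
  | succ n ih =>
    intro gs hlen q' γ κ ht
    cases ht with
    | @tail gs₀ cm g₀ _c2 t step =>
      obtain ⟨t₀, κ₀⟩ := cm
      have hlen₀ : gs₀.length ≤ n := by simp at hlen; omega
      cases step with
      | eps hδ =>
        obtain ⟨gs₁, gs₂, p, p', rfl, t₁, hδp, t₂, hr⟩ := ih gs₀ hlen₀ t₀ γ κ t
        refine ⟨gs₁, gs₂ ++ [.eps], p, p', by simp, t₁, hδp,
          TraceN.tail t₂ (.eps hδ), hr.append (.eps (.nil []))⟩
      | push hδ =>
        exact ⟨gs₀, [], t₀, q', by simp, t, hδ, .refl _, .nil []⟩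
      | pop hδ =>
        rename_i γ''
        obtain ⟨a, b, p₁, p₁', rfl, ta, hδ₁, tb, hrb⟩ := ih gs₀ hlen₀ t₀ γ'' (γ :: κ) t
        have hlena : a.length ≤ n := by simp [List.length_append] at hlen₀ ⊢; omega
        obtain ⟨gs₁, gs₂', p, p', rfl, t₁, hδp, t₂', hr₂⟩ := ih a hlena p₁ γ κ ta
        refine ⟨gs₁, gs₂' ++ StackAct.push γ'' :: (b ++ [StackAct.pop γ'']), p, p',
          by simp, t₁, hδp, ?_, ?_⟩
        · have tmid : TraceN M (p₁, γ :: κ) [StackAct.push γ''] (p₁', γ'' :: γ :: κ) :=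
            WC_step_trace (.push hδ₁)
          have tend : TraceN M (t₀, γ'' :: γ :: κ) [StackAct.pop γ''] (q', γ :: κ) :=
            WC_step_trace (.pop hδ)
          have := WC_traceN_compose t₂' (WC_traceN_compose tmid (WC_traceN_compose tb tend))
          simpa using this
        · have hb : WCRun ([γ''] : List Γ) b [γ''] := by simpa using hrb.mono [γ'']
          exact hr₂.append (.push γ'' (hb.append (.pop γ'' (.nil []))))

/-- Root lemma: every root trace gives a path in the graph and lands in a discovered state. -/
theorem WC_root (hc : WClosure M S E H) :
    ∀ (n : ℕ) (gs : List (StackAct Γ)), gs.length ≤ n → ∀ (s : Q) (κ : List Γ),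
      TraceN M (M.q₀, []) gs (s, κ) → GraphPath E M.q₀ gs s ∧ s ∈ S := by
  intro n
  induction n with
  | zero =>
    intro gs hlen s κ ht
    obtain rfl : gs = [] := List.eq_nil_of_length_eq_zero (Nat.le_zero.mp hlen)
    obtain rfl : s = M.q₀ := congrArg Prod.fst (WC_traceN_nil ht)
    exact ⟨.refl _, hc.c0⟩
  | succ n ih =>
    intro gs hlen s κ ht
    cases ht with
    | refl => exact ⟨.refl _, hc.c0⟩
    | @tail gs₀ cm g₀ _c2 t step =>
      obtain ⟨t₀, κ₀⟩ := cm
      have hlen₀ : gs₀.length ≤ n := by simp at hlen; omega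
      obtain ⟨hpath₀, ht₀⟩ := ih gs₀ hlen₀ t₀ κ₀ t
      cases step with
      | eps hδ =>
        have hedge := (hc.c1 t₀ s ht₀ hδ).1
        exact ⟨hpath₀.tail hedge, hc.c3 _ _ _ hedge⟩
      | push hδ =>
        have hedge := hc.c2 t₀ _ s ht₀ hδ
        exact ⟨hpath₀.tail hedge, hc.c3 _ _ _ hedge⟩
      | pop hδ =>
        rename_i γ
        obtain ⟨gs₁, gs₂, p, p', rfl, t₁, hδp, t₂, hr⟩ :=
          WC_mpush gs₀.length gs₀ le_rfl t₀ γ κ t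
        have hlen₁ : gs₁.length ≤ n := by simp [List.length_append] at hlen₀ ⊢; omega
        obtain ⟨_, hp⟩ := ih gs₁ hlen₁ p κ t₁
        have hedge : (p, StackAct.push γ, p') ∈ E := hc.c2 p γ p' hp hδp
        have hp' : p' ∈ S := hc.c3 _ _ _ hedge
        obtain ⟨_, _, _, hH⟩ := WC_core hc gs₂.length gs₂ le_rfl hr p' (γ :: κ) t₀ _ t₂ hp'
        have hrm : p' = t₀ ∨ (p', t₀) ∈ H := by
          rcases eq_or_ne gs₂ [] with rfl | hne
          · exact Or.inl (congrArg Prod.fst (WC_traceN_nil t₂)).symm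
          · exact Or.inr (hH hne)
        obtain ⟨hpop, _⟩ := hc.c4 p γ p' t₀ s hedge hrm hδ
        exact ⟨hpath₀.tail hpop, hc.c3 _ _ _ hpop⟩

end WCAux4
section WCAux5

variable {Q Γ : Type*}

/-- The batch of edges generated by one round of the work-set iteration. -/
def WCbigE (M : RPDS Q Γ) (W : WState Q Γ) : Set (PEdge Q Γ) :=
  {e | ∃ s ∈ W.dS, e ∈ (sprout M s).1} ∪
  {e | ∃ s γ s', (s, StackAct.push γ, s') ∈ W.dE ∧ e ∈ (addPush M W.E W.H s γ s').1} ∪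
  {e | ∃ s γ s', (s, StackAct.pop γ, s') ∈ W.dE ∧ e ∈ (addPop M W.E W.H s γ s').1} ∪
  {e | ∃ s s', (s, StackAct.eps, s') ∈ W.dE ∧ e ∈ (addEmpty M W.E W.H s s').1} ∪
  {e | ∃ s s', (s, s') ∈ W.dH ∧ e ∈ (addEmpty M W.E W.H s s').1}

/-- The batch of ε-closure pairs generated by one round of the work-set iteration. -/
def WCbigH (M : RPDS Q Γ) (W : WState Q Γ) : Set (Q × Q) :=
  {p | ∃ s ∈ W.dS, p ∈ (sprout M s).2} ∪
  {p | ∃ s γ s', (s, StackAct.push γ, s') ∈ W.dE ∧ p ∈ (addPush M W.E W.H s γ s').2} ∪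
  {p | ∃ s γ s', (s, StackAct.pop γ, s') ∈ W.dE ∧ p ∈ (addPop M W.E W.H s γ s').2} ∪
  {p | ∃ s s', (s, StackAct.eps, s') ∈ W.dE ∧ p ∈ (addEmpty M W.E W.H s s').2} ∪
  {p | ∃ s s', (s, s') ∈ W.dH ∧ p ∈ (addEmpty M W.E W.H s s').2}

variable {M : RPDS Q Γ} {W : WState Q Γ}

theorem WC_F_S : (Fprime M W).S = W.S ∪ W.dS := rfl
theorem WC_F_E : (Fprime M W).E = W.E ∪ W.dE := rfl
theorem WC_F_H : (Fprime M W).H = W.H ∪ W.dH := rfl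
theorem WC_F_dE : (Fprime M W).dE = WCbigE M W \ (W.E ∪ W.dE) := rfl
theorem WC_F_dH : (Fprime M W).dH = WCbigH M W \ W.H := rfl
theorem WC_F_dS :
    (Fprime M W).dS = ({s' | ∃ s g, (s, g, s') ∈ WCbigE M W} ∪ {M.q₀}) \ (W.S ∪ W.dS) := rfl

/-- `addEmpty` always regenerates the pair it processes. -/
theorem WC_addEmpty_self (E : Set (PEdge Q Γ)) (H : Set (Q × Q)) (a b : Q) :
    (a, b) ∈ (addEmpty M E H a b).2 :=
  Or.inl (Or.inr ⟨b, rfl, Or.inr rfl⟩)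

theorem WC_addEmpty_anc (E : Set (PEdge Q Γ)) {H : Set (Q × Q)} {x a : Q} (b : Q)
    (h : (x, a) ∈ H) : (x, b) ∈ (addEmpty M E H a b).2 :=
  Or.inl (Or.inl (Or.inr ⟨x, rfl, Or.inl h⟩))

theorem WC_addEmpty_desc (E : Set (PEdge Q Γ)) {H : Set (Q × Q)} {b y : Q} (a : Q)
    (h : (b, y) ∈ H) : (a, y) ∈ (addEmpty M E H a b).2 :=
  Or.inl (Or.inr ⟨y, rfl, Or.inl h⟩)

/-- Processed ε-pairs persist one round in the work-set. -/
theorem WC_dH_sub_bigH : W.dH ⊆ WCbigH M W := by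
  rintro ⟨a, b⟩ h
  exact Or.inr ⟨a, b, h, WC_addEmpty_self W.E W.H a b⟩

theorem WC_H_stab {x : Q × Q} (h1 : x ∈ (Fprime M W).H) (h2 : x ∉ (Fprime M W).dH) :
    x ∈ W.H := by
  rw [WC_F_H] at h1; rw [WC_F_dH] at h2
  rcases h1 with h | h
  · exact h
  · by_cases hx : x ∈ W.H
    · exact hx
    · exact absurd ⟨WC_dH_sub_bigH h, hx⟩ h2

theorem WC_E_grow : W.E ∪ W.dE ⊆ (Fprime M W).E ∪ (Fprime M W).dE := by
  intro x h; exact Or.inl h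

theorem WC_E_new : WCbigE M W ⊆ (Fprime M W).E ∪ (Fprime M W).dE := by
  intro x h
  by_cases hx : x ∈ W.E ∪ W.dE
  · exact Or.inl hx
  · exact Or.inr ⟨h, hx⟩

theorem WC_H_grow : W.H ∪ W.dH ⊆ (Fprime M W).H ∪ (Fprime M W).dH := by
  intro x h; exact Or.inl h

theorem WC_H_new : WCbigH M W ⊆ (Fprime M W).H ∪ (Fprime M W).dH := by
  intro x h
  by_cases hx : x ∈ W.H
  · exact Or.inl (Or.inl hx)
  · exact Or.inr ⟨h, hx⟩

/-- The loop invariant of the work-set iteration. -/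
structure WInv (M : RPDS Q Γ) (W : WState Q Γ) : Prop where
  a1 : ∀ s q, s ∈ W.S → M.δ s .eps q →
        (s, StackAct.eps, q) ∈ W.E ∪ W.dE ∧ (s, q) ∈ W.H ∪ W.dH
  a2 : ∀ s γ q, s ∈ W.S → M.δ s (.push γ) q → (s, StackAct.push γ, q) ∈ W.E ∪ W.dE
  a3 : ∀ s g q, (s, g, q) ∈ W.E ∪ W.dE → q ∈ W.S ∪ W.dS
  a4 : ∀ s γ p m r, (s, StackAct.push γ, p) ∈ W.E →
        (p = m ∨ ((p, m) ∈ W.H ∧ (p, m) ∉ W.dH)) → M.δ m (.pop γ) r →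
        (m, StackAct.pop γ, r) ∈ W.E ∪ W.dE ∧ (s, r) ∈ W.H ∪ W.dH
  a5 : ∀ a b c, (a, b) ∈ W.H → (a, b) ∉ W.dH → (b, c) ∈ W.H → (b, c) ∉ W.dH →
        (a, c) ∈ W.H ∪ W.dH

theorem WC_inv_init : WInv M (initW : WState Q Γ) := by
  constructor <;> simp [initW]

theorem WC_inv_step (h : WInv M W) : WInv M (Fprime M W) := by
  constructor
  · -- a1
    intro s q hs hδ
    rw [WC_F_S] at hs
    rcases hs with hs | hs
    · obtain ⟨h1, h2⟩ := h.a1 s q hs hδ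
      exact ⟨WC_E_grow h1, WC_H_grow h2⟩
    · refine ⟨WC_E_new ?_, WC_H_new ?_⟩
      · exact Or.inl (Or.inl (Or.inl (Or.inl ⟨s, hs, Or.inl ⟨q, rfl, hδ⟩⟩)))
      · exact Or.inl (Or.inl (Or.inl (Or.inl ⟨s, hs, ⟨q, rfl, hδ⟩⟩)))
  · -- a2
    intro s γ q hs hδ
    rw [WC_F_S] at hs
    rcases hs with hs | hs
    · exact WC_E_grow (h.a2 s γ q hs hδ)
    · exact WC_E_new (Or.inl (Or.inl (Or.inl (Or.inl ⟨s, hs, Or.inr ⟨γ, q, rfl, hδ⟩⟩))))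
  · -- a3
    intro s g q hsq
    rw [WC_F_E, WC_F_dE] at hsq
    rcases hsq with hsq | ⟨hsq, _⟩
    · exact Or.inl (h.a3 s g q hsq)
    · by_cases hq : q ∈ (Fprime M W).S
      · exact Or.inl hq
      · rw [WC_F_S] at hq
        exact Or.inr ⟨Or.inl ⟨s, g, hsq⟩, hq⟩
  · -- a4
    intro s γ p m r hedge hpm hδ
    rw [WC_F_E] at hedge
    have hpm' : p = m ∨ (p, m) ∈ W.H := by
      rcases hpm with h' | ⟨h1, h2⟩
      · exact Or.inl h'
      · exact Or.inr (WC_H_stab h1 h2)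
    rcases hedge with hedge | hedge
    · rcases hpm' with rfl | hpm'
      · obtain ⟨h1, h2⟩ := h.a4 s γ p p r hedge (Or.inl rfl) hδ
        exact ⟨WC_E_grow h1, WC_H_grow h2⟩
      · by_cases hdh : (p, m) ∈ W.dH
        · refine ⟨WC_E_new ?_, WC_H_new ?_⟩
          · exact Or.inr ⟨p, m, hdh,
              ⟨s, p, m, γ, r, rfl, Or.inr rfl, Or.inr rfl, hedge, hδ⟩⟩
          · exact Or.inr ⟨p, m, hdh,
              Or.inl (Or.inl (Or.inl ⟨s, p, m, γ, r, rfl, Or.inr rfl, Or.inr rfl, hedge, hδ⟩))⟩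
        · obtain ⟨h1, h2⟩ := h.a4 s γ p m r hedge (Or.inr ⟨hpm', hdh⟩) hδ
          exact ⟨WC_E_grow h1, WC_H_grow h2⟩
    · have hdesc : m ∈ eDesc W.H p := by
        rcases hpm' with rfl | hpm'
        · exact Or.inr rfl
        · exact Or.inl hpm'
      refine ⟨WC_E_new ?_, WC_H_new ?_⟩
      · exact Or.inl (Or.inl (Or.inl (Or.inr ⟨s, γ, p, hedge, ⟨m, r, rfl, hdesc, hδ⟩⟩)))
      · exact Or.inl (Or.inl (Or.inl (Or.inr ⟨s, γ, p, hedge, ⟨m, r, rfl, hdesc, hδ⟩⟩)))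
  · -- a5
    intro a b c hab hab' hbc hbc'
    have hab2 : (a, b) ∈ W.H := WC_H_stab hab hab'
    have hbc2 : (b, c) ∈ W.H := WC_H_stab hbc hbc'
    by_cases h1 : (a, b) ∈ W.dH
    · refine WC_H_new (Or.inr ⟨a, b, h1, ?_⟩)
      exact Or.inr ⟨a, c, rfl, Or.inr rfl, Or.inl hbc2⟩
    · by_cases h2 : (b, c) ∈ W.dH
      · refine WC_H_new (Or.inr ⟨b, c, h2, ?_⟩)
        exact Or.inl (Or.inl (Or.inr ⟨a, rfl, Or.inl hab2⟩))
      · exact WC_H_grow (h.a5 a b c hab2 h1 hbc2 h2)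

theorem WC_inv_iter (n : ℕ) : WInv M ((Fprime M)^[n] (initW : WState Q Γ)) := by
  induction n with
  | zero => exact WC_inv_init
  | succ n ih => rw [Function.iterate_succ_apply']; exact WC_inv_step ih

end WCAux5
section WCAux6

variable {Q Γ : Type*}

theorem WC_closure_of_fix (M : RPDS Q Γ) (W : WState Q Γ)
    (hiter : ∃ n, (Fprime M)^[n] initW = W)
    (hfix : Function.IsFixedPt (Fprime M) W)
    (hdS : W.dS = ∅) (hdE : W.dE = ∅) (hdH : W.dH = ∅) :
    WClosure M W.S W.E W.H := by
  obtain ⟨n, hn⟩ := hiter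
  have inv : WInv M W := hn ▸ WC_inv_iter n
  have hq0 : M.q₀ ∈ W.S := by
    have h : (Fprime M W).dS = W.dS := congrArg WState.dS hfix
    rw [WC_F_dS, hdS] at h
    by_contra hq
    have : M.q₀ ∈ (({s' | ∃ s g, (s, g, s') ∈ WCbigE M W} ∪ {M.q₀}) \ (W.S ∪ W.dS) :
        Set Q) := ⟨Or.inr rfl, by rw [hdS]; simpa using hq⟩
    rw [hdS] at this
    rw [h] at this
    exact this
  refine ⟨hq0, ?_, ?_, ?_, ?_, ?_⟩
  · intro s q hs hδ
    have := inv.a1 s q hs hδ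
    rwa [hdE, hdH, Set.union_empty, Set.union_empty] at this
  · intro s γ q hs hδ
    have := inv.a2 s γ q hs hδ
    rwa [hdE, Set.union_empty] at this
  · intro s g q hsq
    have := inv.a3 s g q (by rw [hdE, Set.union_empty]; exact hsq)
    rwa [hdS, Set.union_empty] at this
  · intro s γ p m r hedge hpm hδ
    have := inv.a4 s γ p m r hedge ?_ hδ
    · rwa [hdE, hdH, Set.union_empty, Set.union_empty] at this
    · rcases hpm with h | h
      · exact Or.inl h
      · exact Or.inr ⟨h, by rw [hdH]; exact Set.notMem_empty _⟩
  · intro a b c hab hbc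
    have := inv.a5 a b c hab (by rw [hdH]; exact Set.notMem_empty _) hbc
      (by rw [hdH]; exact Set.notMem_empty _)
    rwa [hdH, Set.union_empty] at this

end WCAux6

/-- completeness of the work-set iteration: let
`(G, H, (∅, ∅, ∅)) = lfp(F'(M))` — a fixed point of `F'(M)` with empty
work-sets reached by iterating from the empty start.  For every trace
`π : (s₀, ⟨⟩) ⟼^{g⃗}* (s, κ)` in `M`, the same labeled path from `s₀` to `s`
exists in the graph `G`, and for every non-empty balanced subtrace
`(s_b, κ') ⟼^{g⃗'}* (s_a, κ')` of `π` (one whose action string `g⃗'` is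
non-empty and has net `ε`), the ε-edge `(s_b, s_a)` belongs to `H`. -/
theorem worklist_complete (M : RPDS Q Γ) (W : WState Q Γ)
    (hiter : ∃ n, (Fprime M)^[n] initW = W)
    (hfix : Function.IsFixedPt (Fprime M) W)
    (hdS : W.dS = ∅) (hdE : W.dE = ∅) (hdH : W.dH = ∅) :
    ∀ (gs : List (StackAct Γ)) (s : Q) (κ : List Γ),
      TraceN M (M.q₀, []) gs (s, κ) →
      GraphPath W.E M.q₀ gs s ∧
      (∀ (gs₁ gs' gs₂ : List (StackAct Γ)) (sb sa : Q) (κ' : List Γ),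
        gs = gs₁ ++ gs' ++ gs₂ →
        TraceN M (M.q₀, []) gs₁ (sb, κ') →
        TraceN M (sb, κ') gs' (sa, κ') →
        TraceN M (sa, κ') gs₂ (s, κ) →
        gs' ≠ [] → BalancedActs gs' → (sb, sa) ∈ W.H) := by
  have hcl : WClosure M W.S W.E W.H := WC_closure_of_fix M W hiter hfix hdS hdE hdH
  intro gs s κ ht
  refine ⟨(WC_root hcl gs.length gs le_rfl s κ ht).1, ?_⟩
  intro gs₁ gs' gs₂ sb sa κ' _ h1 h2 _ hne hbal
  have hsb : sb ∈ W.S := (WC_root hcl gs₁.length gs₁ le_rfl sb κ' h1).2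
  exact (WC_core hcl gs'.length gs' le_rfl (WC_balanced_run hbal) sb κ' sa κ' h2 hsb).2.2.2 hne
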